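/- Let k₀ ∈ ℕ be odd, ω = k₀/2 and A > 0. Then there exists κ₀ ∈ ℕ such that for every odd integer κ ≥ κ₀ and every α ∈ [0, A]: ω²k² > α for all k ∈ κℤ_odd, and | |m + a(l)| − √(ω²k² − α) | ≥ δ₀/4 for all l ∈ (−1/2, 1/2], all m ∈ ℤ and all k ∈ κℤ_odd. -/

import Mathlib

/-- The Floquet exponent function of the necklace graph. -/
noncomputable def blochA (l : ℝ) : ℝ :=
  (1 / (2 * Real.pi)) * Real.arccos ((1 / 9) * (8 * Real.cos (2 * Real.pi * l) + 1))

/-- The constant `δ₀ = 1 - arccos(-7/9)/π`. -/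
noncomputable def delta0 : ℝ := 1 - Real.arccos (-7 / 9) / Real.pi

/-- The set `κ·ℤ_odd = {κ·j : j odd}`. -/
def kappaOdd (κ : ℤ) : Set ℤ := {k | ∃ j : ℤ, Odd j ∧ k = κ * j}

lemma arccos_antitone : Antitone Real.arccos := by
  intro x y h
  rw [Real.arccos_eq_pi_div_two_sub_arcsin, Real.arccos_eq_pi_div_two_sub_arcsin]
  have := Real.monotone_arcsin h
  linarith

lemma delta0_pos : 0 < delta0 := by
  have hlt : Real.arccos (-7 / 9) < Real.pi := by
    refine lt_of_le_of_ne (Real.arccos_le_pi _) fun h => ?_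
    have := Real.arccos_eq_pi.mp h
    norm_num at this
  have hpi := Real.pi_pos
  unfold delta0
  rw [sub_pos, div_lt_one hpi]
  exact hlt

lemma blochA_nonneg (l : ℝ) : 0 ≤ blochA l := by
  unfold blochA
  have hpi := Real.pi_pos
  have := Real.arccos_nonneg ((1 / 9) * (8 * Real.cos (2 * Real.pi * l) + 1))
  positivity

lemma blochA_le (l : ℝ) : blochA l ≤ (1 - delta0) / 2 := by
  have hpi := Real.pi_pos
  have harg : (-7 / 9 : ℝ) ≤ (1 / 9) * (8 * Real.cos (2 * Real.pi * l) + 1) := by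
    have := Real.neg_one_le_cos (2 * Real.pi * l)
    nlinarith
  have hle : Real.arccos ((1 / 9) * (8 * Real.cos (2 * Real.pi * l) + 1)) ≤
      Real.arccos (-7 / 9) := arccos_antitone harg
  have heq : (1 - delta0) / 2 = (1 / (2 * Real.pi)) * Real.arccos (-7 / 9) := by
    unfold delta0
    field_simp
    ring
  rw [blochA, heq]
  have h2pi : (0:ℝ) < 1 / (2 * Real.pi) := by positivity
  exact mul_le_mul_of_nonneg_left hle h2pi.le

/-- Distance of a half-odd-integer to any integer is at least 1/2. -/
lemma half_odd_dist (q n : ℤ) (hq : Odd q) : (1 : ℝ) / 2 ≤ |(q : ℝ) / 2 - n| := by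
  have hne : q - 2 * n ≠ 0 := by
    rcases hq with ⟨r, hr⟩
    omega
  have h1 : (1 : ℤ) ≤ |q - 2 * n| := Int.one_le_abs hne
  have h1R : (1 : ℝ) ≤ |((q - 2 * n : ℤ) : ℝ)| := by
    rw [← Int.cast_abs]; exact_mod_cast h1
  have heq : (q : ℝ) / 2 - n = ((q - 2 * n : ℤ) : ℝ) / 2 := by push_cast; ring
  rw [heq, abs_div, abs_two]
  linarith

set_option maxHeartbeats 1000000 in
/-- (Validation of the hypothesis of Lemma 4.3 in Lemma 4.4.) For
`ω = k₀/2` with `k₀` odd and `A > 0` there is `κ₀` such that for all odd `κ ≥ κ₀` and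
all `α ∈ [0, A]`: `ω²k² > α` for all `k ∈ κℤ_odd`, and
`||m + a(l)| - √(ω²k² - α)| ≥ δ₀/4` for all `l ∈ (-1/2, 1/2]`, `m ∈ ℤ`, `k ∈ κℤ_odd`. -/
theorem sqrt_band_gap_condition (k₀ : ℕ) (hk₀ : Odd k₀) (A : ℝ) (hA : 0 < A) :
    ∃ κ₀ : ℕ, ∀ κ : ℤ, Odd κ → (κ₀ : ℤ) ≤ κ → ∀ α ∈ Set.Icc (0 : ℝ) A,
      (∀ k ∈ kappaOdd κ, α < ((k₀ : ℝ) / 2) ^ 2 * ((k : ℤ) : ℝ) ^ 2) ∧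
      (∀ l ∈ Set.Ioc (-(1 / 2) : ℝ) (1 / 2), ∀ m : ℤ, ∀ k ∈ kappaOdd κ,
        abs (|(m : ℝ) + blochA l| -
            Real.sqrt (((k₀ : ℝ) / 2) ^ 2 * ((k : ℤ) : ℝ) ^ 2 - α)) ≥ delta0 / 4) := by
  have hδ := delta0_pos
  refine ⟨⌈8 * A / delta0 + 4 * A + 1⌉₊, ?_⟩
  intro κ hκodd hκ₀ α hα
  obtain ⟨hα0, hαA⟩ := hα
  have hceil : (8 * A / delta0 + 4 * A + 1 : ℝ) ≤ (⌈8 * A / delta0 + 4 * A + 1⌉₊ : ℝ) :=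
    Nat.le_ceil _
  have hκR : (8 * A / delta0 + 4 * A + 1 : ℝ) ≤ (κ : ℝ) := by
    refine hceil.trans ?_
    exact_mod_cast hκ₀
  have hApos : (0:ℝ) < 8 * A / delta0 + 4 * A + 1 := by positivity
  have hκpos : (0:ℝ) < (κ : ℝ) := lt_of_lt_of_le hApos hκR
  have hκone : (1:ℝ) ≤ (κ : ℝ) := by
    have : (0:ℝ) ≤ 8 * A / delta0 + 4 * A := by positivity
    linarith
  have hκZ : (0:ℤ) < κ := by exact_mod_cast hκpos
  have hk₀one : 1 ≤ k₀ := hk₀.pos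
  -- general facts about elements of κℤ_odd
  have key : ∀ k ∈ kappaOdd κ,
      (κ : ℝ) ≤ (k₀ : ℝ) / 2 * |(k : ℝ)| * 2 ∧
      Odd ((k₀ : ℤ) * |k|) ∧
      ((k₀ : ℝ) / 2 * |(k : ℝ)|) ^ 2 = ((k₀ : ℝ) / 2) ^ 2 * ((k : ℤ) : ℝ) ^ 2 := by
    rintro k ⟨j, hj, rfl⟩
    have hjne : j ≠ 0 := by rintro rfl; exact (Int.not_odd_iff_even.2 ⟨0, rfl⟩) hj
    have hj1 : (1:ℤ) ≤ |j| := Int.one_le_abs hjne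
    have habs : |κ * j| = κ * |j| := by
      rw [abs_mul, abs_of_pos hκZ]
    have hkabs : κ ≤ |κ * j| := by
      rw [habs]; nlinarith
    refine ⟨?_, ?_, ?_⟩
    · have hkabsR : (κ : ℝ) ≤ |((κ * j : ℤ) : ℝ)| := by
        rw [← Int.cast_abs]; exact_mod_cast hkabs
      have hk₀R : (1:ℝ) ≤ (k₀ : ℝ) := by exact_mod_cast hk₀one
      have habsnn : (0:ℝ) ≤ |((κ * j : ℤ) : ℝ)| := abs_nonneg _
      nlinarith
    · refine Odd.mul ?_ ?_
      · exact (Int.odd_coe_nat k₀).2 hk₀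
      · exact odd_abs.2 (hκodd.mul hj)
    · rw [mul_pow, sq_abs]
  -- first claim: α < ω²k²
  have claim1 : ∀ k ∈ kappaOdd κ, α < ((k₀ : ℝ) / 2) ^ 2 * ((k : ℤ) : ℝ) ^ 2 := by
    intro k hk
    obtain ⟨ht2, -, hsq⟩ := key k hk
    set t : ℝ := (k₀ : ℝ) / 2 * |(k : ℝ)| with htdef
    have ht : (κ : ℝ) / 2 ≤ t := by linarith
    have hκA : 4 * A < (κ : ℝ) := by
      have : (0:ℝ) ≤ 8 * A / delta0 := by positivity
      linarith
    -- t^2 ≥ (κ/2)^2 ≥ κ/4 > A ≥ α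
    have htpos : (0:ℝ) < t := lt_of_lt_of_le (by linarith) ht
    have ht2' : (κ : ℝ) ^ 2 / 4 ≤ t ^ 2 := by nlinarith
    have : A < t ^ 2 := by nlinarith
    rw [← hsq]; linarith
  refine ⟨claim1, ?_⟩
  intro l _ m k hk
  obtain ⟨ht2, hodd, hsq⟩ := key k hk
  set t : ℝ := (k₀ : ℝ) / 2 * |(k : ℝ)| with htdef
  have ht : (κ : ℝ) / 2 ≤ t := by linarith
  have htpos : (0:ℝ) < t := lt_of_lt_of_le (by linarith) ht
  have hαt : α < t ^ 2 := by
    have := claim1 k hk; rw [← hsq] at this; linarith [this]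
  set s : ℝ := Real.sqrt (((k₀ : ℝ) / 2) ^ 2 * ((k : ℤ) : ℝ) ^ 2 - α) with hsdef
  have hs0 : 0 ≤ s := Real.sqrt_nonneg _
  have hssq : s ^ 2 = t ^ 2 - α := by
    rw [hsdef, ← hsq]
    exact Real.sq_sqrt (by linarith)
  have hst : s ≤ t := by nlinarith
  -- ε = t - s ≤ δ₀/4
  have hεA : t - s ≤ α / t := by
    rw [le_div_iff₀ htpos]
    have h : s ^ 2 ≤ s * t := by
      rw [pow_two]; exact mul_le_mul_of_nonneg_left hst hs0
    have expand : (t - s) * t = t ^ 2 - s * t := by ring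
    rw [expand]
    linarith
  have hαtδ : α / t ≤ delta0 / 4 := by
    rw [div_le_div_iff₀ htpos (by norm_num)]
    have hκδ : 8 * A ≤ (κ : ℝ) * delta0 := by
      have h8 : 8 * A / delta0 ≤ (κ : ℝ) := by
        have : (0:ℝ) ≤ 4 * A + 1 := by positivity
        linarith
      calc 8 * A = 8 * A / delta0 * delta0 := by field_simp
        _ ≤ (κ : ℝ) * delta0 := mul_le_mul_of_nonneg_right h8 hδ.le
    have h1 : delta0 * ((κ:ℝ)/2) ≤ delta0 * t := mul_le_mul_of_nonneg_left ht hδ.le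
    linarith
  have hε : t - s ≤ delta0 / 4 := hεA.trans hαtδ
  -- distance of s to the integer |m|
  set n : ℤ := |m| with hndef
  -- half-odd distance: t = (k₀ * |k|)/2
  have htq : t = ((k₀ : ℤ) * |k| : ℤ) / 2 := by
    rw [htdef]
    push_cast [Int.cast_abs]
    ring
  have hdist : (1:ℝ)/2 ≤ |t - n| := by
    rw [htq]; exact half_odd_dist _ n hodd
  have hns : (1:ℝ)/2 - delta0/4 ≤ |(n : ℝ) - s| := by
    have tri := abs_sub_le ((n:ℝ)) s t
    have h1 : |s - t| = t - s := by rw [abs_sub_comm, abs_of_nonneg (by linarith)]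
    have h2 : |(n:ℝ) - t| = |t - n| := abs_sub_comm _ _
    rw [h1] at tri
    rw [h2] at tri
    linarith
  -- distance of |m + a| to n is blochA l
  have ha0 := blochA_nonneg l
  have ha1 := blochA_le l
  have hδ1 : delta0 < 1 := by
    unfold delta0
    have : 0 < Real.arccos (-7/9) / Real.pi := by
      have h1 : 0 < Real.arccos (-7/9) := Real.arccos_pos.2 (by norm_num)
      positivity
    linarith
  have hX : abs (|(m : ℝ) + blochA l| - (n : ℝ)) = blochA l := by
    rcases le_or_gt 0 m with hm | hm
    · have hmn : (n : ℝ) = (m : ℝ) := by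
        rw [hndef]; exact_mod_cast congrArg (Int.cast : ℤ → ℝ) (abs_of_nonneg hm)
      have h1 : |(m : ℝ) + blochA l| = (m : ℝ) + blochA l := by
        have : (0:ℝ) ≤ (m:ℝ) := by exact_mod_cast hm
        rw [abs_of_nonneg]; linarith
      rw [h1, hmn]
      simp [abs_of_nonneg ha0]
    · have hm1 : m ≤ -1 := by omega
      have hm1R : (m : ℝ) ≤ -1 := by exact_mod_cast hm1
      have hmnZ : n = -m := by rw [hndef]; exact abs_of_neg hm
      have hmn : (n : ℝ) = -(m : ℝ) := by rw [hmnZ]; push_cast; ring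
      have h1 : |(m : ℝ) + blochA l| = -((m : ℝ) + blochA l) := by
        rw [abs_of_neg]; linarith
      rw [h1, hmn]
      have : -((m : ℝ) + blochA l) - -(m : ℝ) = -(blochA l) := by ring
      rw [this, abs_neg, abs_of_nonneg ha0]
  -- conclude
  have tri2 := abs_sub_le ((n:ℝ)) (|(m : ℝ) + blochA l|) s
  have h3 : abs ((n:ℝ) - |(m : ℝ) + blochA l|) = blochA l := by rw [abs_sub_comm, hX]
  rw [h3] at tri2
  have hfin : delta0 / 4 ≤ abs (|(m : ℝ) + blochA l| - s) := by linarith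
  exact hfin
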